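/- Let n be a finite-dimensional 2-step nilpotent Lie algebra with Z(n) ⊆ {n,n}, and let x·y be an LR-structure on n with {n,n}·n = 0. Then the LR-structure is complete, i.e., all left multiplications L(x) are nilpotent operators. -/

import Mathlib

open Polynomial

/-- In a finite-dimensional non-unital commutative algebra over a field, every element is
either "nilpotent" or there is a nonzero idempotent. -/
theorem aux_nil_or_idem {K Q : Type*} [Field K] [NonUnitalCommRing Q] [Module K Q]
    [IsScalarTower K Q Q] [SMulCommClass K Q Q] [Module.Finite K Q] (a : Q) :
    (∃ m : ℕ, (fun b => a * b)^[m] a = 0) ∨ (∃ e : Q, e ≠ 0 ∧ e * e = e) := by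
  haveI : Module.Finite K (Unitization K Q) :=
    Module.Finite.equiv (Unitization.linearEquiv K K Q).symm
  set u : Unitization K Q := (a : Unitization K Q) with hu
  have hpow : ∀ m : ℕ, u ^ (m + 1) = ((fun b => a * b)^[m] a : Q) := by
    intro m
    induction m with
    | zero => simp; exact hu
    | succ k ih =>
      rw [Function.iterate_succ_apply', pow_succ', ih, hu, ← Unitization.inr_mul]
  by_cases hnil : IsNilpotent u
  · left
    obtain ⟨m, hm⟩ := hnil
    rcases m with _ | k
    · exfalso; rw [pow_zero] at hm; exact one_ne_zero hm
    · refine ⟨k, Unitization.inr_injective (R := K) ?_⟩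
      rw [← hpow k, hm, Unitization.inr_zero]
  · right
    have hint : IsIntegral K u := IsIntegral.of_finite K u
    obtain ⟨P, hPm, hPev⟩ := hint
    have hP0 : P ≠ 0 := hPm.ne_zero
    set m := P.rootMultiplicity 0 with hmdef
    obtain ⟨S, hS⟩ := P.pow_rootMultiplicity_dvd 0
    rw [map_zero, sub_zero] at hS
    have hXS : ¬ (X ∣ S) := by
      intro ⟨T, hT⟩
      apply P.pow_rootMultiplicity_not_dvd hP0 0
      rw [map_zero, sub_zero, ← hmdef]
      exact ⟨T, by rw [hS, hT]; ring⟩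
    have hc : S.coeff 0 ≠ 0 := fun h => hXS (X_dvd_iff.mpr h)
    have hcop : IsCoprime (X ^ m : K[X]) S := by
      refine IsCoprime.pow_left ⟨-(C (S.coeff 0)⁻¹ * S.divX), C (S.coeff 0)⁻¹, ?_⟩
      have h1 : X * S.divX + C (S.coeff 0) = S := X_mul_divX_add S
      have h2 : S - X * S.divX = C (S.coeff 0) := by linear_combination -h1
      calc -(C (S.coeff 0)⁻¹ * S.divX) * X + C (S.coeff 0)⁻¹ * S
          = C (S.coeff 0)⁻¹ * (S - X * S.divX) := by ring
        _ = C (S.coeff 0)⁻¹ * C (S.coeff 0) := by rw [h2]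
        _ = 1 := by rw [← C_mul, inv_mul_cancel₀ hc, C_1]
    obtain ⟨A, B, hAB⟩ := hcop
    have hPu : aeval u P = 0 := by rwa [aeval_def]
    have hXmS : u ^ m * aeval u S = 0 := by
      have := congrArg (aeval u) hS
      rw [hPu, map_mul, map_pow, aeval_X] at this
      exact this.symm
    set e : Unitization K Q := aeval u A * u ^ m with hedef
    have he1 : e + aeval u B * aeval u S = 1 := by
      have := congrArg (aeval u) hAB
      rw [map_add, map_mul, map_mul, map_pow, aeval_X, map_one] at this
      exact this
    have hee : e * e = e := by
      have h2 : e = 1 - aeval u B * aeval u S := by rw [← he1]; ring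
      calc e * e = e * (1 - aeval u B * aeval u S) := by rw [← h2]
        _ = e - aeval u A * aeval u B * (u ^ m * aeval u S) := by rw [hedef]; ring
        _ = e := by rw [hXmS, mul_zero, sub_zero]
    have he0 : e ≠ 0 := by
      intro h
      apply hnil
      rw [h, zero_add] at he1
      exact ⟨m, by
        calc u ^ m = u ^ m * (aeval u B * aeval u S) := by rw [he1, mul_one]
          _ = aeval u B * (u ^ m * aeval u S) := by ring
          _ = 0 := by rw [hXmS, mul_zero]⟩
    have hm0 : m ≠ 0 := by
      intro h0
      rw [h0, pow_zero, one_mul] at hXmS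
      have hSd := X_mul_divX_add S
      have := congrArg (aeval u) hSd
      rw [map_add, map_mul, aeval_X, hXmS, aeval_C] at this
      have hfst := congrArg (fun x : Unitization K Q => x.fst) this
      beta_reduce at hfst
      rw [Unitization.fst_add, Unitization.fst_mul, hu, Unitization.fst_inr, zero_mul,
        zero_add] at hfst
      simp only [Algebra.algebraMap_eq_smul_one, Unitization.fst_smul, Unitization.fst_one,
        Unitization.fst_inr, smul_eq_mul, mul_one] at hfst
      exact hc (by rw [hfst]; rfl)
    obtain ⟨k, hk⟩ := Nat.exists_eq_succ_of_ne_zero hm0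
    have hfste : e.fst = 0 := by
      rw [hedef, hk, pow_succ, Unitization.fst_mul, Unitization.fst_mul, hu,
        Unitization.fst_inr, mul_zero, mul_zero]
    have heinr : e = (e.snd : Unitization K Q) := by
      conv_lhs => rw [← Unitization.inl_fst_add_inr_snd_eq e]
      rw [hfste, Unitization.inl_zero, zero_add]
    refine ⟨e.snd, ?_, ?_⟩
    · intro h
      apply he0
      rw [heinr, h, Unitization.inr_zero]
    · apply Unitization.inr_injective (R := K)
      rw [Unitization.inr_mul, ← heinr, hee, heinr]

/-- Let `n` be a finite-dimensional 2-step nilpotent Lie algebra with `Z(n) ⊆ {n,n}`,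
and let `x·y` be an LR-structure on `n` with `{n,n}·n = 0`. Then all left
multiplications `L(x)` are nilpotent. -/
theorem stmt16 {K V : Type*} [Field K] [CharZero K] [AddCommGroup V] [Module K V]
    [FiniteDimensional K V]
    (n : V →ₗ[K] V →ₗ[K] V)
    (hna : ∀ x, n x x = 0)
    (hnj : ∀ x y z, n (n x y) z + n (n y z) x + n (n z x) y = 0)
    (hn2 : ∀ x y z, n (n x y) z = 0)
    (hz : ∀ x : V, (∀ y, n x y = 0) →
      x ∈ Submodule.span K {v : V | ∃ a b, v = n a b})
    (mul : V →ₗ[K] V →ₗ[K] V)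
    (hlr1 : ∀ x y, mul x y - mul y x = n x y)
    (hlr2 : ∀ x y z, mul x (mul y z) = mul y (mul x z))
    (hlr3 : ∀ x y z, mul (mul x y) z = mul (mul x z) y)
    (hcom : ∀ x y z, mul (n x y) z = 0) :
    ∀ x : V, IsNilpotent (mul x : Module.End K V) := by
  classical
  set W : Submodule K V := Submodule.span K {v : V | ∃ a b, v = n a b} with hWdef
  have hmemW : ∀ a b, n a b ∈ W := fun a b => Submodule.subset_span ⟨a, b, rfl⟩
  have hWn : ∀ w ∈ W, n w = 0 := by
    intro w hw
    refine Submodule.span_induction ?_ ?_ ?_ ?_ hw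
    · rintro v ⟨a, b, rfl⟩; ext z; exact hn2 a b z
    · exact map_zero n
    · intro a b _ _ ha hb; rw [map_add, ha, hb, add_zero]
    · intro c a _ ha; rw [map_smul, ha, smul_zero]
  have hWl : ∀ w ∈ W, mul w = 0 := by
    intro w hw
    refine Submodule.span_induction ?_ ?_ ?_ ?_ hw
    · rintro v ⟨a, b, rfl⟩; ext z; exact hcom a b z
    · exact map_zero mul
    · intro a b _ _ ha hb; rw [map_add, ha, hb, add_zero]
    · intro c a _ ha; rw [map_smul, ha, smul_zero]
  have hWn' : ∀ w ∈ W, ∀ z, n w z = 0 := fun w hw z => by rw [hWn w hw]; rfl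
  have hWl' : ∀ w ∈ W, ∀ z, mul w z = 0 := fun w hw z => by rw [hWl w hw]; rfl
  have hWr : ∀ (z w : V), w ∈ W → mul z w = 0 := by
    intro z w hw
    have h1 := hlr1 w z
    rw [hWn' w hw z, hWl' w hw z] at h1
    rwa [zero_sub, neg_eq_zero] at h1
  have hskew : ∀ a b, n a b = - n b a := by
    intro a b
    have h := hna (a + b)
    simp only [map_add, LinearMap.add_apply, hna, zero_add, add_zero] at h
    first
    | exact eq_neg_of_add_eq_zero_left h
    | exact eq_neg_of_add_eq_zero_right h
  have hmuln : ∀ y u z, mul y (n u z) = 0 := by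
    intro y u z
    have h7 := hlr1 (n u z) y
    rw [hcom u z y, hn2 u z y, zero_sub, neg_eq_zero] at h7
    exact h7
  have hKI : ∀ y u z, n (mul y u) z = n (mul y z) u := by
    intro y u z
    rw [← hlr1, ← hlr1, hlr2 z y u, hlr2 u y z, hlr3 y u z]
    have e7 : mul y (mul u z) - mul y (mul z u) = mul y (n u z) := by
      rw [← hlr1 u z, map_sub]
    rw [hmuln y u z] at e7
    have : mul y (mul z u) = mul y (mul u z) := (sub_eq_zero.mp e7).symm
    rw [this]
  -- the quotient algebra
  have hker1 : ∀ x0 : V, W ≤ LinearMap.ker ((W.mkQ).comp (mul x0)) := by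
    intro x0 w hw
    simp only [LinearMap.mem_ker, LinearMap.comp_apply]
    rw [hWr x0 w hw, map_zero]
  have innerapp : ∀ (x0 v : V),
      W.liftQ ((W.mkQ).comp (mul x0)) (hker1 x0) (Submodule.Quotient.mk v)
        = Submodule.Quotient.mk (mul x0 v) := by
    intro x0 v
    rw [Submodule.liftQ_apply]
    rfl
  let mQ1 : V →ₗ[K] (V ⧸ W) →ₗ[K] (V ⧸ W) :=
    { toFun := fun x0 => W.liftQ ((W.mkQ).comp (mul x0)) (hker1 x0)
      map_add' := by
        intro v w
        apply LinearMap.ext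
        intro q
        obtain ⟨z, rfl⟩ := Submodule.Quotient.mk_surjective W q
        rw [LinearMap.add_apply, innerapp, innerapp, innerapp, map_add,
          LinearMap.add_apply, Submodule.Quotient.mk_add]
      map_smul' := by
        intro c v
        apply LinearMap.ext
        intro q
        obtain ⟨z, rfl⟩ := Submodule.Quotient.mk_surjective W q
        rw [RingHom.id_apply, LinearMap.smul_apply, innerapp, innerapp, map_smul,
          LinearMap.smul_apply, Submodule.Quotient.mk_smul] }
  have hker2 : W ≤ LinearMap.ker mQ1 := by
    intro w hw
    rw [LinearMap.mem_ker]
    apply LinearMap.ext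
    intro q
    obtain ⟨z, rfl⟩ := Submodule.Quotient.mk_surjective W q
    show W.liftQ ((W.mkQ).comp (mul w)) (hker1 w) (Submodule.Quotient.mk z) = 0
    rw [innerapp, hWl' w hw z]
    exact Submodule.Quotient.mk_zero W
  let mQ : (V ⧸ W) →ₗ[K] (V ⧸ W) →ₗ[K] (V ⧸ W) := W.liftQ mQ1 hker2
  have hmk : ∀ v w : V, mQ (Submodule.Quotient.mk v) (Submodule.Quotient.mk w)
      = Submodule.Quotient.mk (mul v w) := by
    intro v w
    show W.liftQ mQ1 hker2 (Submodule.Quotient.mk v) (Submodule.Quotient.mk w) = _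
    rw [Submodule.liftQ_apply]
    exact innerapp v w
  letI ringQ : NonUnitalCommRing (V ⧸ W) :=
    { (inferInstance : AddCommGroup (V ⧸ W)) with
      mul := fun a b => mQ a b
      left_distrib := fun a b c => map_add (mQ a) b c
      right_distrib := fun a b c => by
        show mQ (a + b) c = mQ a c + mQ b c
        rw [map_add]; rfl
      zero_mul := fun a => by show mQ 0 a = 0; rw [map_zero]; rfl
      mul_zero := fun a => map_zero (mQ a)
      mul_assoc := by
        intro a b c
        obtain ⟨v, rfl⟩ := Submodule.Quotient.mk_surjective W a
        obtain ⟨w, rfl⟩ := Submodule.Quotient.mk_surjective W b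
        obtain ⟨z, rfl⟩ := Submodule.Quotient.mk_surjective W c
        show mQ (mQ _ _) _ = mQ _ (mQ _ _)
        rw [hmk, hmk, hmk, hmk, Submodule.Quotient.eq]
        rw [hlr3 v w z, hlr2 v w z]
        rw [hlr1]
        exact hmemW _ _
      mul_comm := by
        intro a b
        obtain ⟨v, rfl⟩ := Submodule.Quotient.mk_surjective W a
        obtain ⟨w, rfl⟩ := Submodule.Quotient.mk_surjective W b
        show mQ _ _ = mQ _ _
        rw [hmk, hmk, Submodule.Quotient.eq, hlr1]
        exact hmemW _ _ }
  letI : SMulCommClass K (V ⧸ W) (V ⧸ W) :=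
    ⟨fun k a b => (map_smul (mQ a) k b).symm⟩
  letI : IsScalarTower K (V ⧸ W) (V ⧸ W) :=
    ⟨fun k a b => by
      show mQ (k • a) b = k • (mQ a b)
      rw [map_smul]
      rfl⟩
  haveI : Module.Finite K (V ⧸ W) := inferInstance
  intro x
  rcases aux_nil_or_idem (K := K) (Submodule.Quotient.mk x : V ⧸ W) with ⟨m, hm⟩ | ⟨eb, heb0, hebid⟩
  · -- nilpotent case
    have hit : ∀ j : ℕ,
        (fun b => (Submodule.Quotient.mk x : V ⧸ W) * b)^[j] (Submodule.Quotient.mk x)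
          = Submodule.Quotient.mk ((fun v => mul x v)^[j] x) := by
      intro j
      induction j with
      | zero => rfl
      | succ k ih =>
        rw [Function.iterate_succ_apply', Function.iterate_succ_apply', ih]
        exact hmk x _
    rw [hit m, Submodule.Quotient.mk_eq_zero] at hm
    set P : Module.End K V := mul x with hP
    have claimA : ∀ (k : ℕ) (z : V),
        (P ^ (k + 1)) z - mul ((fun v => mul x v)^[k] x) z ∈ W := by
      intro k
      induction k with
      | zero =>
        intro z
        rw [pow_one, Function.iterate_zero_apply]
        simp [hP]
      | succ k ih =>
        intro z
        have hw := ih z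
        have h1 : (P ^ (k + 1 + 1)) z = mul x ((P ^ (k + 1)) z) := by
          rw [pow_succ']; rfl
        have h0 : (P ^ (k + 1)) z
            = mul ((fun v => mul x v)^[k] x) z
              + ((P ^ (k + 1)) z - mul ((fun v => mul x v)^[k] x) z) := by abel
        have h2 : mul x ((P ^ (k + 1)) z)
            = mul x (mul ((fun v => mul x v)^[k] x) z) := by
          rw [h0, map_add, hWr x _ hw, add_zero]
        have h4 : mul x (mul ((fun v => mul x v)^[k] x) z)
            = mul ((fun v => mul x v)^[k] x) (mul x z) := hlr2 x _ z
        have h5 : mul ((fun v => mul x v)^[k + 1] x) z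
            = mul (mul x z) ((fun v => mul x v)^[k] x) := by
          rw [Function.iterate_succ_apply']
          exact hlr3 x _ z
        rw [h1, h2, h4, h5]
        have h6 : mul ((fun v => mul x v)^[k] x) (mul x z)
            - mul (mul x z) ((fun v => mul x v)^[k] x)
            = - n (mul x z) ((fun v => mul x v)^[k] x) := by
          rw [← hlr1]; abel
        rw [h6]
        exact W.neg_mem (hmemW _ _)
    refine ⟨m + 2, ?_⟩
    ext z
    have h7 := claimA m z
    rw [hWl' _ hm z, sub_zero] at h7
    have h8 : (P ^ (m + 2)) z = mul x ((P ^ (m + 1)) z) := by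
      rw [pow_succ']; rfl
    show (P ^ (m + 2)) z = 0
    rw [h8, hWr x _ h7]
  · -- idempotent case : contradiction
    exfalso
    obtain ⟨e, rfl⟩ := Submodule.Quotient.mk_surjective W eb
    have he : mul e e - e ∈ W := by
      have h1 : (Submodule.Quotient.mk (mul e e) : V ⧸ W) = Submodule.Quotient.mk e := by
        rw [← hmk]; exact hebid
      exact (Submodule.Quotient.eq W).mp h1
    have hsW : ∀ w ∈ W, n e w = 0 := fun w hw => by
      rw [hskew e w, hWn' w hw e, neg_zero]
    have step1 : ∀ z, n e z = - n e (mul e z) := by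
      intro z
      have h1 : n (mul e e) z = n e z := by
        have hd : mul e e = (mul e e - e) + e := by abel
        rw [hd, map_add, LinearMap.add_apply, hWn' _ he z, zero_add]
      have h2 : n (mul e e) z = n (mul e z) e := hKI e e z
      rw [← h1, h2, hskew (mul e z) e]
    have step2 : ∀ z, mul e (mul e z) - mul e z ∈ W := by
      intro z
      have h3 : mul (mul e e) z = mul (mul e z) e := hlr3 e e z
      have h4 : mul (mul e e) z = mul e z := by
        have hd : mul e e = (mul e e - e) + e := by abel
        rw [hd, map_add, LinearMap.add_apply, hWl' _ he z, zero_add]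
      have h5 : mul (mul e z) e - mul e (mul e z) = n (mul e z) e := hlr1 (mul e z) e
      have h6 : mul e (mul e z) - mul e z = - n (mul e z) e := by
        rw [← h5, ← h3, h4]; abel
      rw [h6]
      exact W.neg_mem (hmemW _ _)
    have hstep : ∀ z, n e (mul e z) = 0 := by
      intro z
      have hb := step1 (mul e z)
      have hc : n e (mul e (mul e z)) = n e (mul e z) := by
        have hd : mul e (mul e z) = (mul e (mul e z) - mul e z) + mul e z := by abel
        rw [hd, map_add, hsW _ (step2 z), zero_add]
      rw [hc] at hb
      have h2X : (2 : K) • n e (mul e z) = 0 := by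
        rw [two_smul]
        nth_rewrite 1 [hb]
        exact neg_add_cancel _
      exact (smul_eq_zero.mp h2X).resolve_left two_ne_zero
    have hcentral : ∀ z, n e z = 0 := fun z => by rw [step1 z, hstep z, neg_zero]
    apply heb0
    rw [Submodule.Quotient.mk_eq_zero]
    exact hz e hcentral
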